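/- Let φ ∈ C²([0,A]) with φ(0) = φ(A) = 0, φ'(0) = 1, φ'(A) = -1, φ > 0 on (0,A), and suppose -φ''/φ = c + ψ + aφ' on (0,A) where c, a are constants and ψ : [0,A] → ℝ satisfies φ'·ψ = 0 pointwise. Then a·∫₀^A φ·(φ')² dr = 0, and hence a = 0 whenever ∫₀^A φ(φ')² dr > 0. -/

import Mathlib

/-- The integration-by-parts computation in the soliton classification:
if `-φ''/φ = c + ψ + aφ'` on `(0,A)` with `φ'ψ = 0` and the stated boundary
conditions, then `a·∫₀^A φ(φ')² = 0`, hence `a = 0` when the integral is positive. -/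
theorem stmt_12 (A : ℝ) (hA : 0 < A) (φ φ' φ'' ψ : ℝ → ℝ) (c a : ℝ)
    (hd1 : ∀ r ∈ Set.Icc (0:ℝ) A, HasDerivWithinAt φ (φ' r) (Set.Icc 0 A) r)
    (hd2 : ∀ r ∈ Set.Icc (0:ℝ) A, HasDerivWithinAt φ' (φ'' r) (Set.Icc 0 A) r)
    (hcont : ContinuousOn φ'' (Set.Icc 0 A))
    (h0 : φ 0 = 0) (hAend : φ A = 0) (h0' : φ' 0 = 1) (hA' : φ' A = -1)
    (hpos : ∀ r ∈ Set.Ioo (0:ℝ) A, 0 < φ r)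
    (heq : ∀ r ∈ Set.Ioo (0:ℝ) A, -(φ'' r) / φ r = c + ψ r + a * φ' r)
    (hψ : ∀ r ∈ Set.Icc (0:ℝ) A, φ' r * ψ r = 0) :
    a * (∫ r in (0:ℝ)..A, φ r * (φ' r)^2) = 0 ∧
    (0 < ∫ r in (0:ℝ)..A, φ r * (φ' r)^2 → a = 0) := by
  have hφc : ContinuousOn φ (Set.Icc 0 A) := fun r hr => (hd1 r hr).continuousWithinAt
  have hφ'c : ContinuousOn φ' (Set.Icc 0 A) := fun r hr => (hd2 r hr).continuousWithinAt
  -- F = φ'^2/2 + c φ^2/2, F' = φ'φ'' + cφφ'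
  set F : ℝ → ℝ := fun r => (φ' r)^2 / 2 + c * (φ r)^2 / 2 with hF
  set G : ℝ → ℝ := fun r => φ' r * φ'' r + c * (φ r * φ' r) with hG
  have hGc : ContinuousOn G (Set.Icc 0 A) :=
    (hφ'c.mul hcont).add (continuousOn_const.mul (hφc.mul hφ'c))
  have hGint : IntervalIntegrable G MeasureTheory.volume 0 A :=
    hGc.intervalIntegrable_of_Icc hA.le
  have hderiv : ∀ r ∈ Set.Ioo (0:ℝ) A, HasDerivWithinAt F (G r) (Set.Ioi r) r := by
    intro r hr
    have hrI : Set.Icc (0:ℝ) A ∈ nhds r := Icc_mem_nhds hr.1 hr.2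
    have h1 : HasDerivAt φ (φ' r) r := (hd1 r (Set.Ioo_subset_Icc_self hr)).hasDerivAt hrI
    have h2 : HasDerivAt φ' (φ'' r) r := (hd2 r (Set.Ioo_subset_Icc_self hr)).hasDerivAt hrI
    have hd := ((h2.pow 2).div_const 2).add (((h1.pow 2).div_const 2).const_mul c)
    have : HasDerivAt F (G r) r := by
      have heqF : F = fun x => φ' x ^ 2 / 2 + c * (φ x ^ 2 / 2) := by funext x; ring
      rw [heqF]
      convert hd using 1
      push_cast
      all_goals try rfl
      ring
    exact this.hasDerivWithinAt
  have hFc : ContinuousOn F (Set.Icc 0 A) :=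
    ((hφ'c.pow 2).div_const 2).add ((continuousOn_const.mul (hφc.pow 2)).div_const 2)
  have hint : (∫ r in (0:ℝ)..A, G r) = F A - F 0 :=
    intervalIntegral.integral_eq_sub_of_hasDeriv_right_of_le hA.le
      (by simpa [Set.uIcc_of_le hA.le] using hFc) hderiv hGint
  have hFval : F A - F 0 = 0 := by simp [hF, h0, hAend, h0', hA']
  -- pointwise identity on Ioo
  have hpt : ∀ r ∈ Set.Ioo (0:ℝ) A, a * (φ r * (φ' r)^2) = -G r := by
    intro r hr
    have hφr := (hpos r hr).ne'
    have h1 := heq r hr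
    have h2 := hψ r (Set.Ioo_subset_Icc_self hr)
    have h3 : -(φ'' r) = (c + ψ r + a * φ' r) * φ r := by
      field_simp at h1
      linarith [h1]
    have : -(φ'' r) * φ' r = (c + ψ r + a * φ' r) * φ r * φ' r := by rw [h3]
    have h4 : φ r * (φ' r * ψ r) = 0 := by rw [h2]; ring
    simp only [hG]
    nlinarith [this, h4]
  -- a.e. equality on interval
  have hcongr : (∫ r in (0:ℝ)..A, a * (φ r * (φ' r)^2)) = ∫ r in (0:ℝ)..A, -G r := by
    apply intervalIntegral.integral_congr_ae
    have hne : ∀ᵐ x : ℝ, x ≠ A := by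
      have : MeasureTheory.volume ({A} : Set ℝ) = 0 := Real.volume_singleton
      rw [MeasureTheory.ae_iff]
      simp [Set.setOf_eq_eq_singleton, this]
    filter_upwards [hne] with x hx hmem
    rw [Set.uIoc_of_le hA.le] at hmem
    exact hpt x ⟨hmem.1, lt_of_le_of_ne hmem.2 hx⟩
  have hmain : a * (∫ r in (0:ℝ)..A, φ r * (φ' r)^2) = 0 := by
    rw [← intervalIntegral.integral_const_mul, hcongr, intervalIntegral.integral_neg, hint,
      hFval, neg_zero]
  refine ⟨hmain, fun hposI => ?_⟩
  rcases mul_eq_zero.1 hmain with h | h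
  · exact h
  · exact absurd h hposI.ne'
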